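/- Suppose char k ≠ 2, α = ±q^s and β = ±q^t with s, t ∈ ℤ, s ≠ 1, t ≠ −1. Then for some 0 ≤ i ≤ n−1 one has dₙ(eᵢ^{n−1}) = 0 if and only if [s ≤ 0, t ≥ 0, α = (−1)^{t−s}q^s, β = (−1)^{t−s}q^t, and n = t−s+1]; and there exists 1 ≤ i ≤ n−1 with yxeᵢⁿ ∉ Im dₙ if and only if the same sign conditions hold and n = t−s+2. -/

import Mathlib

/-- The matrix of the differential `dₙ : Λⁿ → Λ^{n+1}` of the complex computing
`HH^*(Λ, ₁Λ_ψ)` for `ψ(x) = αx`, `ψ(y) = βy`, in the standard basis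
`{eᵢ, xeᵢ, yeᵢ, yxeᵢ}` (encoded by `Fin 4` as `0 ↦ eᵢ, 1 ↦ xeᵢ, 2 ↦ yeᵢ, 3 ↦ yxeᵢ`):
`eᵢ^{n−1} ↦ [1+(−1)ⁿqⁱα]xeᵢⁿ + [q^{n−i−1}+(−1)ⁿβ]ye^n_{i+1}`,
`xeᵢ^{n−1} ↦ [q^{n−i−1}+(−1)^{n+1}qβ]yxe^n_{i+1}`,
`yeᵢ^{n−1} ↦ [−q+(−1)ⁿqⁱα]yxeᵢⁿ`, `yxeᵢ^{n−1} ↦ 0`. -/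
def Dmat (k : Type) [Field k] (q α β : k) (n : ℕ) :
    Matrix (Fin (n + 1) × Fin 4) (Fin n × Fin 4) k := fun jb ia =>
  if jb.2 = 1 ∧ ia.2 = 0 ∧ (jb.1 : ℕ) = (ia.1 : ℕ) then
    1 + (-1 : k) ^ n * q ^ (ia.1 : ℕ) * α
  else if jb.2 = 2 ∧ ia.2 = 0 ∧ (jb.1 : ℕ) = (ia.1 : ℕ) + 1 then
    q ^ (n - (ia.1 : ℕ) - 1) + (-1 : k) ^ n * β
  else if jb.2 = 3 ∧ ia.2 = 1 ∧ (jb.1 : ℕ) = (ia.1 : ℕ) + 1 then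
    q ^ (n - (ia.1 : ℕ) - 1) + (-1 : k) ^ (n + 1) * q * β
  else if jb.2 = 3 ∧ ia.2 = 2 ∧ (jb.1 : ℕ) = (ia.1 : ℕ) then
    -q + (-1 : k) ^ n * q ^ (ia.1 : ℕ) * α
  else 0

/-- The differential `dₙ : Λⁿ → Λ^{n+1}` as a `k`-linear map. -/
noncomputable def dMap (k : Type) [Field k] (q α β : k) (n : ℕ) :
    (Fin n × Fin 4 → k) →ₗ[k] (Fin (n + 1) × Fin 4 → k) :=
  (Dmat k q α β n).mulVecLin

set_option linter.unusedSectionVars false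

section Aux
variable {k : Type} [Field k] {q : k} (hq : q ≠ 0)
    (hq' : ∀ m : ℕ, 0 < m → q ^ m ≠ 1) (hchar : ringChar k ≠ 2)

include hchar in
lemma my_neg_one_ne_one : (-1 : k) ≠ 1 := by
  intro h
  have h2 : (2 : k) = 0 := by linear_combination -h
  exact Ring.two_ne_zero hchar h2

include hq hq' in
lemma qz_one : ∀ {a : ℤ}, q ^ a = 1 → a = 0 := by
  intro a h
  rcases lt_trichotomy a 0 with h1 | h1 | h1
  · have : q ^ ((-a).toNat) = 1 := by
      rw [← zpow_natCast, Int.toNat_of_nonneg (by omega), zpow_neg, h, inv_one]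
    exact absurd this (hq' _ (by omega))
  · exact h1
  · have : q ^ (a.toNat) = 1 := by
      rw [← zpow_natCast, Int.toNat_of_nonneg (by omega), h]
    exact absurd this (hq' _ (by omega))

include hq hq' hchar in
lemma qz_ne_neg_one {a : ℤ} : q ^ a ≠ -1 := by
  intro h
  have h2 : q ^ (2 * a) = 1 := by rw [mul_comm, zpow_mul, h]; norm_num
  have := qz_one hq hq' h2
  have ha : a = 0 := by omega
  subst ha
  rw [zpow_zero] at h
  exact my_neg_one_ne_one hchar h.symm

include hq hq' in
lemma qz_eq_qz_iff {a b : ℤ} : q ^ a = q ^ b ↔ a = b := by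
  constructor
  · intro h
    have h2 : q ^ (a - b) = 1 := by
      rw [zpow_sub₀ hq, h, div_self (zpow_ne_zero _ hq)]
    have := qz_one hq hq' h2; omega
  · rintro rfl; rfl

include hq hq' hchar in
lemma qz_ne_neg_qz {a b : ℤ} : q ^ a ≠ -q ^ b := by
  intro h
  have h2 : q ^ (a - b) = -1 := by
    rw [zpow_sub₀ hq, h, neg_div, div_self (zpow_ne_zero _ hq)]
  exact qz_ne_neg_one hq hq' hchar h2

include hq in
lemma qpow_mul_qzpow (i : ℕ) (s : ℤ) : q ^ i * q ^ s = q ^ ((i : ℤ) + s) := by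
  rw [zpow_add₀ hq, zpow_natCast]

lemma neg_pow_pred {n : ℕ} (hn : 1 ≤ n) : (-1 : k) ^ (n - 1) = -(-1 : k) ^ n := by
  conv_rhs => rw [show n = (n - 1) + 1 by omega]
  rw [pow_succ]; ring

lemma neg_pow_sub_two {n : ℕ} (hn : 2 ≤ n) : (-1 : k) ^ (n - 2) = (-1 : k) ^ n := by
  conv_rhs => rw [show n = (n - 2) + 2 by omega]
  rw [pow_add]; ring

include hq hq' hchar in
lemma part1_scalar {α β : k} (s t : ℤ) (n : ℕ) (hn : 1 ≤ n)
    (hA : α = q ^ s ∨ α = -(q ^ s)) (hB : β = q ^ t ∨ β = -(q ^ t)) :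
    (∃ i : ℕ, i < n ∧ 1 + (-1:k)^n * q^i * α = 0 ∧ q^(n-i-1) + (-1:k)^n * β = 0) ↔
      (s ≤ 0 ∧ 0 ≤ t ∧ α = (-1:k)^(t-s) * q^s ∧ β = (-1:k)^(t-s) * q^t ∧
        (n:ℤ) = t - s + 1) := by
  constructor
  · rintro ⟨i, hi, h1, h2⟩
    rcases neg_one_pow_eq_or k n with hm | hm <;> rw [hm] at h1 h2
    · rcases hA with rfl | rfl
      · exact absurd (show q ^ ((i:ℤ)+s) = -1 by
          rw [← qpow_mul_qzpow hq]; linear_combination h1) (qz_ne_neg_one hq hq' hchar)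
      · have his : (i:ℤ) + s = 0 := qz_one hq hq' (by
          rw [← qpow_mul_qzpow hq]; linear_combination -h1)
        rcases hB with rfl | rfl
        · exact absurd (show q ^ (((n-i-1:ℕ):ℤ)) = -q^t by
            rw [zpow_natCast]; linear_combination h2) (qz_ne_neg_qz hq hq' hchar)
        · have hnt : ((n-i-1:ℕ):ℤ) = t := (qz_eq_qz_iff hq hq').mp (by
            rw [zpow_natCast]; linear_combination h2)
          have hint : ((n-i-1:ℕ):ℤ) = (n:ℤ) - i - 1 := by omega
          have hts : (-1:k)^(t-s) = -1 := by
            rw [show t - s = ((n-1:ℕ):ℤ) by omega, zpow_natCast, neg_pow_pred hn, hm]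
            try norm_num
          exact ⟨by omega, by omega, by rw [hts]; ring, by rw [hts]; ring, by omega⟩
    · rcases hA with rfl | rfl
      · have his : (i:ℤ) + s = 0 := qz_one hq hq' (by
          rw [← qpow_mul_qzpow hq]; linear_combination -h1)
        rcases hB with rfl | rfl
        · have hnt : ((n-i-1:ℕ):ℤ) = t := (qz_eq_qz_iff hq hq').mp (by
            rw [zpow_natCast]; linear_combination h2)
          have hint : ((n-i-1:ℕ):ℤ) = (n:ℤ) - i - 1 := by omega
          have hts : (-1:k)^(t-s) = 1 := by
            rw [show t - s = ((n-1:ℕ):ℤ) by omega, zpow_natCast, neg_pow_pred hn, hm]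
            try norm_num
          exact ⟨by omega, by omega, by rw [hts]; ring, by rw [hts]; ring, by omega⟩
        · exact absurd (show q ^ (((n-i-1:ℕ):ℤ)) = -q^t by
            rw [zpow_natCast]; linear_combination h2) (qz_ne_neg_qz hq hq' hchar)
      · exact absurd (show q ^ ((i:ℤ)+s) = -1 by
          rw [← qpow_mul_qzpow hq]; linear_combination h1) (qz_ne_neg_one hq hq' hchar)
  · rintro ⟨hs0, ht0, hα, hβ, hnts⟩
    have hm2 : (-1:k)^n * (-1:k)^n = 1 := by
      rcases neg_one_pow_eq_or k n with h | h <;> rw [h] <;> norm_num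
    rw [show t - s = ((n-1:ℕ):ℤ) by omega, zpow_natCast, neg_pow_pred hn] at hα hβ
    refine ⟨(-s).toNat, by omega, ?_, ?_⟩
    · rw [hα]
      have hqq : q ^ ((-s).toNat) * q ^ s = 1 := by
        rw [qpow_mul_qzpow hq, show (((-s).toNat:ℤ)) + s = 0 by omega, zpow_zero]
      linear_combination -hqq - (q ^ ((-s).toNat) * q ^ s) * hm2
    · rw [hβ]
      have hq2 : q ^ (n - (-s).toNat - 1) = q ^ t := by
        rw [← zpow_natCast, show ((n - (-s).toNat - 1 : ℕ):ℤ) = t by omega]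
      linear_combination hq2 - q ^ t * hm2

include hq hq' hchar in
lemma part2_scalar {α β : k} (s t : ℤ) (n : ℕ) (hn : 1 ≤ n)
    (hA : α = q ^ s ∨ α = -(q ^ s)) (hB : β = q ^ t ∨ β = -(q ^ t)) :
    (∃ j : ℕ, 1 ≤ j ∧ j ≤ n - 1 ∧ q^(n-j) + (-1:k)^(n+1) * q * β = 0 ∧
        -q + (-1:k)^n * q^j * α = 0) ↔
      (s ≤ 0 ∧ 0 ≤ t ∧ α = (-1:k)^(t-s) * q^s ∧ β = (-1:k)^(t-s) * q^t ∧
        (n:ℤ) = t - s + 2) := by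
  constructor
  · rintro ⟨j, hj1, hjn, h1, h2⟩
    have hn2 : 2 ≤ n := by omega
    rw [pow_succ] at h1
    rcases neg_one_pow_eq_or k n with hm | hm <;> rw [hm] at h1 h2
    · rcases hA with rfl | rfl
      · have hjs : (j:ℤ) + s = 1 := by
          have := (qz_eq_qz_iff hq hq' (a := (j:ℤ)+s) (b := 1)).mp (by
            rw [← qpow_mul_qzpow hq, zpow_one]; linear_combination h2)
          omega
        rcases hB with rfl | rfl
        · have hnt : ((n-j:ℕ):ℤ) = t + 1 := (qz_eq_qz_iff hq hq').mp (by
            rw [zpow_natCast, zpow_add₀ hq, zpow_one]; linear_combination h1)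
          have hint : ((n-j:ℕ):ℤ) = (n:ℤ) - j := by omega
          have hts : (-1:k)^(t-s) = 1 := by
            rw [show t - s = ((n-2:ℕ):ℤ) by omega, zpow_natCast, neg_pow_sub_two hn2, hm]
          exact ⟨by omega, by omega, by rw [hts]; ring, by rw [hts]; ring, by omega⟩
        · exact absurd (show q ^ (((n-j:ℕ):ℤ)) = -q^(t+1) by
            rw [zpow_natCast, zpow_add₀ hq, zpow_one]; linear_combination h1)
            (qz_ne_neg_qz hq hq' hchar)
      · exact absurd (show q ^ ((j:ℤ)+s) = -q^(1:ℤ) by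
          rw [← qpow_mul_qzpow hq, zpow_one]; linear_combination -h2)
          (qz_ne_neg_qz hq hq' hchar)
    · rcases hA with rfl | rfl
      · exact absurd (show q ^ ((j:ℤ)+s) = -q^(1:ℤ) by
          rw [← qpow_mul_qzpow hq, zpow_one]; linear_combination -h2)
          (qz_ne_neg_qz hq hq' hchar)
      · have hjs : (j:ℤ) + s = 1 := by
          have := (qz_eq_qz_iff hq hq' (a := (j:ℤ)+s) (b := 1)).mp (by
            rw [← qpow_mul_qzpow hq, zpow_one]; linear_combination h2)
          omega
        rcases hB with rfl | rfl
        · exact absurd (show q ^ (((n-j:ℕ):ℤ)) = -q^(t+1) by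
            rw [zpow_natCast, zpow_add₀ hq, zpow_one]; linear_combination h1)
            (qz_ne_neg_qz hq hq' hchar)
        · have hnt : ((n-j:ℕ):ℤ) = t + 1 := (qz_eq_qz_iff hq hq').mp (by
            rw [zpow_natCast, zpow_add₀ hq, zpow_one]; linear_combination h1)
          have hint : ((n-j:ℕ):ℤ) = (n:ℤ) - j := by omega
          have hts : (-1:k)^(t-s) = -1 := by
            rw [show t - s = ((n-2:ℕ):ℤ) by omega, zpow_natCast, neg_pow_sub_two hn2, hm]
          exact ⟨by omega, by omega, by rw [hts]; ring, by rw [hts]; ring, by omega⟩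
  · rintro ⟨hs0, ht0, hα, hβ, hnts⟩
    have hn2 : 2 ≤ n := by omega
    have hm2 : (-1:k)^n * (-1:k)^n = 1 := by
      rcases neg_one_pow_eq_or k n with h | h <;> rw [h] <;> norm_num
    rw [show t - s = ((n-2:ℕ):ℤ) by omega, zpow_natCast, neg_pow_sub_two hn2] at hα hβ
    refine ⟨(1-s).toNat, by omega, by omega, ?_, ?_⟩
    · rw [pow_succ, hβ]
      have hq2 : q ^ (n - (1-s).toNat) = q ^ t * q := by
        rw [← zpow_natCast, show ((n - (1-s).toNat : ℕ):ℤ) = t + 1 by omega,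
          zpow_add₀ hq, zpow_one]
      linear_combination hq2 - (q ^ t * q) * hm2
    · rw [hα]
      have hqq : q ^ ((1-s).toNat) * q ^ s = q := by
        rw [qpow_mul_qzpow hq, show (((1-s).toNat:ℤ)) + s = 1 by omega, zpow_one]
      linear_combination hqq + (q ^ ((1-s).toNat) * q ^ s) * hm2

lemma dMap_single (k : Type) [Field k] (q α β : k) (n : ℕ) (ia : Fin n × Fin 4) (c : k) :
    dMap k q α β n (Pi.single ia c) = fun jb => Dmat k q α β n jb ia * c := by
  simp [dMap, Matrix.mulVecLin_apply, Matrix.mulVec_single]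
  funext jb; simp [mul_comm]

lemma col0_iff (k : Type) [Field k] (q α β : k) (n : ℕ) (i : Fin n) :
    dMap k q α β n (Pi.single (i, (0 : Fin 4)) 1) = 0 ↔
      (1 + (-1:k)^n * q^(i:ℕ) * α = 0 ∧ q^(n-(i:ℕ)-1) + (-1:k)^n * β = 0) := by
  rw [dMap_single]
  constructor
  · intro h
    have hlt : (i:ℕ) < n := i.isLt
    have h1 := congrFun h (⟨(i:ℕ), by omega⟩, (1 : Fin 4))
    have h2 := congrFun h (⟨(i:ℕ)+1, by omega⟩, (2 : Fin 4))
    have e1 : Dmat k q α β n (⟨(i:ℕ), by omega⟩, (1 : Fin 4)) (i, 0) =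
        1 + (-1:k)^n * q^(i:ℕ) * α := by
      simp [Dmat]
    have e2 : Dmat k q α β n (⟨(i:ℕ)+1, by omega⟩, (2 : Fin 4)) (i, 0) =
        q^(n-(i:ℕ)-1) + (-1:k)^n * β := by
      simp [Dmat]
    rw [e1] at h1
    rw [e2] at h2
    simp only [mul_one, Pi.zero_apply] at h1 h2
    exact ⟨h1, h2⟩
  · rintro ⟨h1, h2⟩
    funext ⟨j, b⟩
    simp only [Pi.zero_apply, mul_one, Dmat]
    split_ifs with c1 c2 c3 c4
    · exact h1
    · exact h2
    · exact absurd c3.2.1 (by decide)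
    · exact absurd c4.2.1 (by decide)
    · rfl

lemma row3_iff (k : Type) [Field k] (q α β : k) (n : ℕ) (hn : 1 ≤ n) (i : Fin (n+1))
    (hi1 : 1 ≤ (i:ℕ)) (hi2 : (i:ℕ) ≤ n - 1) :
    (Pi.single (i, (3 : Fin 4)) (1:k) ∉ LinearMap.range (dMap k q α β n)) ↔
      (q ^ (n - (i:ℕ)) + (-1:k)^(n+1) * q * β = 0 ∧
        -q + (-1:k)^n * q^(i:ℕ) * α = 0) := by
  have hilt : (i:ℕ) < n := by omega
  constructor
  · intro hmem
    constructor
    · by_contra hc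
      apply hmem
      refine ⟨Pi.single ((⟨(i:ℕ)-1, by omega⟩ : Fin n), (1 : Fin 4))
        (q ^ (n - (i:ℕ)) + (-1:k)^(n+1) * q * β)⁻¹, ?_⟩
      rw [dMap_single]
      funext lb
      by_cases hlb : lb = (i, (3 : Fin 4))
      · rw [hlb, Pi.single_eq_same]
        have e : Dmat k q α β n (i, (3 : Fin 4)) (⟨(i:ℕ)-1, by omega⟩, (1 : Fin 4)) =
            q ^ (n - (i:ℕ)) + (-1:k)^(n+1) * q * β := by
          simp only [Dmat]
          rw [if_neg (by rintro ⟨h, -⟩; exact absurd h (by decide)),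
            if_neg (by rintro ⟨h, -⟩; exact absurd h (by decide)),
            if_pos ⟨trivial, trivial, by omega⟩,
            show n - ((i:ℕ)-1) - 1 = n - (i:ℕ) by omega]
        rw [e, mul_inv_cancel₀ hc]
      · rw [Pi.single_eq_of_ne hlb]
        obtain ⟨l, b⟩ := lb
        have e : Dmat k q α β n (l, b) (⟨(i:ℕ)-1, by omega⟩, (1 : Fin 4)) = 0 := by
          simp only [Dmat]
          split_ifs with c1 c2 c3 c4
          · exact absurd c1.2.1 (by decide)
          · exact absurd c2.2.1 (by decide)
          · exfalso
            obtain ⟨hb, -, hl⟩ := c3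
            subst hb
            have hli : l = i := Fin.ext (by omega)
            exact hlb (by rw [hli])
          · exact absurd c4.2.1 (by decide)
          · rfl
        rw [e, zero_mul]
    · by_contra hd
      apply hmem
      refine ⟨Pi.single ((⟨(i:ℕ), by omega⟩ : Fin n), (2 : Fin 4))
        (-q + (-1:k)^n * q^(i:ℕ) * α)⁻¹, ?_⟩
      rw [dMap_single]
      funext lb
      by_cases hlb : lb = (i, (3 : Fin 4))
      · rw [hlb, Pi.single_eq_same]
        have e : Dmat k q α β n (i, (3 : Fin 4)) (⟨(i:ℕ), by omega⟩, (2 : Fin 4)) =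
            -q + (-1:k)^n * q^(i:ℕ) * α := by
          simp only [Dmat]
          rw [if_neg (by rintro ⟨h, -⟩; exact absurd h (by decide)),
            if_neg (by rintro ⟨h, -⟩; exact absurd h (by decide)),
            if_neg (by rintro ⟨-, h, -⟩; exact absurd h (by decide)),
            if_pos (by simp)]
        rw [e, mul_inv_cancel₀ hd]
      · rw [Pi.single_eq_of_ne hlb]
        obtain ⟨l, b⟩ := lb
        have e : Dmat k q α β n (l, b) (⟨(i:ℕ), by omega⟩, (2 : Fin 4)) = 0 := by
          simp only [Dmat]
          split_ifs with c1 c2 c3 c4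
          · exact absurd c1.2.1 (by decide)
          · exact absurd c2.2.1 (by decide)
          · exact absurd c3.2.1 (by decide)
          · exfalso
            obtain ⟨hb, -, hl⟩ := c4
            subst hb
            have hli : l = i := Fin.ext hl
            exact hlb (by rw [hli])
          · rfl
        rw [e, zero_mul]
  · rintro ⟨hc, hd⟩ ⟨v, hv⟩
    have hval := congrFun hv (i, (3 : Fin 4))
    rw [Pi.single_eq_same] at hval
    have hrow : ∀ ia : Fin n × Fin 4, Dmat k q α β n (i, (3 : Fin 4)) ia = 0 := by
      rintro ⟨a, b⟩
      simp only [Dmat]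
      split_ifs with c1 c2 c3 c4
      · exact absurd c1.1 (by decide)
      · exact absurd c2.1 (by decide)
      · obtain ⟨-, -, ha⟩ := c3
        rw [show n - (a:ℕ) - 1 = n - (i:ℕ) by omega]
        exact hc
      · obtain ⟨-, -, ha⟩ := c4
        rw [show ((a:ℕ)) = (i:ℕ) from ha.symm]
        exact hd
      · rfl
    have hz : dMap k q α β n v (i, (3 : Fin 4)) =
        ∑ ia : Fin n × Fin 4, Dmat k q α β n (i, (3 : Fin 4)) ia * v ia := by
      simp [dMap, Matrix.mulVecLin_apply, Matrix.mulVec, dotProduct]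
    rw [hz, Finset.sum_eq_zero (fun ia _ => by rw [hrow ia, zero_mul])] at hval
    exact one_ne_zero hval.symm


/-- suppose `char k ≠ 2`, `α = ±q^s`, `β = ±q^t` with `s,t ∈ ℤ`,
`s ≠ 1`, `t ≠ −1`. Then `dₙ(eᵢ^{n−1}) = 0` for some `0 ≤ i ≤ n−1` if and only if
`s ≤ 0`, `t ≥ 0`, `α = (−1)^{t−s}q^s`, `β = (−1)^{t−s}q^t` and `n = t−s+1`; and
there exists `1 ≤ i ≤ n−1` with `yxeᵢⁿ ∉ Im dₙ` if and only if the same sign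
conditions hold and `n = t−s+2`. -/

theorem stmt14 (k : Type) [Field k] (q α β : k) (hq : q ≠ 0)
    (hq' : ∀ m : ℕ, 0 < m → q ^ m ≠ 1)
    (hchar : ringChar k ≠ 2) (s t : ℤ) (hs : s ≠ 1) (ht : t ≠ -1)
    (hA : α = q ^ s ∨ α = -(q ^ s)) (hB : β = q ^ t ∨ β = -(q ^ t))
    (n : ℕ) (hn : 1 ≤ n) :
    ((∃ i : Fin n, dMap k q α β n (Pi.single (i, (0 : Fin 4)) 1) = 0) ↔
      (s ≤ 0 ∧ 0 ≤ t ∧ α = (-1 : k) ^ (t - s) * q ^ s ∧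
        β = (-1 : k) ^ (t - s) * q ^ t ∧ (n : ℤ) = t - s + 1)) ∧
    ((∃ i : Fin (n + 1), 1 ≤ (i : ℕ) ∧ (i : ℕ) ≤ n - 1 ∧
        Pi.single (i, (3 : Fin 4)) (1 : k) ∉ LinearMap.range (dMap k q α β n)) ↔
      (s ≤ 0 ∧ 0 ≤ t ∧ α = (-1 : k) ^ (t - s) * q ^ s ∧
        β = (-1 : k) ^ (t - s) * q ^ t ∧ (n : ℤ) = t - s + 2)) := by
  constructor
  · constructor
    · rintro ⟨i, hi⟩
      have hcc := (col0_iff k q α β n i).mp hi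
      exact (part1_scalar hq hq' hchar s t n hn hA hB).mp ⟨(i:ℕ), i.isLt, hcc.1, hcc.2⟩
    · intro h
      obtain ⟨i, hi, h1, h2⟩ := (part1_scalar hq hq' hchar s t n hn hA hB).mpr h
      exact ⟨⟨i, hi⟩, (col0_iff k q α β n ⟨i, hi⟩).mpr ⟨h1, h2⟩⟩
  · constructor
    · rintro ⟨i, hi1, hi2, hi⟩
      have hcc := (row3_iff k q α β n hn i hi1 hi2).mp hi
      exact (part2_scalar hq hq' hchar s t n hn hA hB).mp ⟨(i:ℕ), hi1, hi2, hcc.1, hcc.2⟩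
    · intro h
      obtain ⟨j, hj1, hj2, h1, h2⟩ := (part2_scalar hq hq' hchar s t n hn hA hB).mpr h
      exact ⟨⟨j, by omega⟩, hj1, hj2,
        (row3_iff k q α β n hn ⟨j, by omega⟩ hj1 hj2).mpr ⟨h1, h2⟩⟩
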